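/- Let a, b, x, y be complex numbers with x y ≠ 0, and let ρ_+, ρ_− ∈ ℂ be the two roots of ρ^2 − ((1 + a x + b y)/(x y)) ρ + (a b − 1)/(x y) = 0, so that ρ_+ + ρ_− = (1 + a x + b y)/(x y) and ρ_+ ρ_− = (a b − 1)/(x y). Assume ρ_+ ≠ ρ_−, that (ρ_± y − a)(ρ_± x − b) ≠ 0 for both roots, and that (a + y)(b + x) ≠ 0. Then (1/(x y (ρ_+ − ρ_−))) · ( ρ_+^2/((ρ_+ y − a)(ρ_+ x − b)) − ρ_−^2/((ρ_− y − a)(ρ_− x − b)) ) = (a b + a x + b y)/(x y (a + y)(b + x)). -/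
import Mathlib


/-- **Sum-over-roots identity for the Newton-polytope push-forward of a quadrilateral.**
If `ρ₊, ρ₋` are the two (distinct) roots of
`ρ² - ((1 + ax + by)/(xy)) ρ + (ab - 1)/(xy) = 0`, with the stated nonvanishing
assumptions, then
`(1/(xy(ρ₊ - ρ₋)))(ρ₊²/((ρ₊y - a)(ρ₊x - b)) - ρ₋²/((ρ₋y - a)(ρ₋x - b)))
  = (ab + ax + by)/(xy(a + y)(b + x))`. -/
theorem stmt_17 (a b x y ρp ρm : ℂ) (hxy : x * y ≠ 0)
    (hsum : ρp + ρm = (1 + a * x + b * y) / (x * y))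
    (hprod : ρp * ρm = (a * b - 1) / (x * y))
    (hne : ρp ≠ ρm)
    (hp : (ρp * y - a) * (ρp * x - b) ≠ 0)
    (hm : (ρm * y - a) * (ρm * x - b) ≠ 0)
    (hab : (a + y) * (b + x) ≠ 0) :
    (1 / (x * y * (ρp - ρm))) *
        (ρp ^ 2 / ((ρp * y - a) * (ρp * x - b)) -
          ρm ^ 2 / ((ρm * y - a) * (ρm * x - b))) =
      (a * b + a * x + b * y) / (x * y * (a + y) * (b + x)) := by
  have hsum' : (ρp + ρm) * (x * y) = 1 + a * x + b * y := by
    rw [hsum, div_mul_cancel₀ _ hxy]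
  have hprod' : (ρp * ρm) * (x * y) = a * b - 1 := by
    rw [hprod, div_mul_cancel₀ _ hxy]
  have hp' : (ρp * y - a) * (ρp * x - b) = ρp + 1 := by
    linear_combination ρp * hsum' - hprod'
  have hm' : (ρm * y - a) * (ρm * x - b) = ρm + 1 := by
    linear_combination ρm * hsum' - hprod'
  rw [hp'] at hp
  rw [hm'] at hm
  have hd : ρp - ρm ≠ 0 := sub_ne_zero.mpr hne
  rw [hp', hm',
    show a * b + a * x + b * y = x * y * (ρp * ρm + ρp + ρm) from by
      linear_combination -hsum' - hprod',
    show x * y * (a + y) * (b + x) = x * y * (x * y) * ((ρp + 1) * (ρm + 1)) from by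
      linear_combination (-(x * y)) * hsum' + (-(x * y)) * hprod']
  field_simp
  ring
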